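/- For fixed 0 ≤ s < r and indices i,j satisfying |i-j| ≤ r-s and i+j ≤ r+s, the quantity A_i^j is Θ(n^{r-s-j+min{s,i,j}}) as n → ∞. -/

import Mathlib

/-- For fixed `0 ≤ s < r` and indices `i, j` with `|i-j| ≤ r-s` and `i+j ≤ r+s`,
the quantity `A_i^j` is `Θ(n^(r-s-j+min{s,i,j}))` as `n → ∞`. -/
theorem stmt8 (r s i j : ℕ) (hs : s < r) (hi : i ≤ r) (hj : j ≤ r)
    (h1 : ((i : ℤ) - (j : ℤ)).natAbs ≤ r - s) (h2 : i + j ≤ r + s) :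
    ∃ c C : ℝ, 0 < c ∧ 0 < C ∧ ∃ n₀ : ℕ, ∀ n ≥ n₀, ∀ x y : Finset (Fin n),
      x.card = r → y.card = r → (x ∩ y).card = i →
      (c * (n : ℝ) ^ (r + min s (min i j) - s - j) ≤
        (({z : Finset (Fin n) | z.card = r ∧ (z ∩ y).card = j ∧ (z ∩ x).card = s}.ncard : ℕ) : ℝ) ∧
      (({z : Finset (Fin n) | z.card = r ∧ (z ∩ y).card = j ∧ (z ∩ x).card = s}.ncard : ℕ) : ℝ) ≤
        C * (n : ℝ) ^ (r + min s (min i j) - s - j)) := by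
  set a := min s (min i j) with ha
  set e := r + a - s - j with he
  have ha1 : a ≤ s := by simp only [ha]; omega
  have ha2 : a ≤ i := by simp only [ha]; omega
  have ha3 : a ≤ j := by simp only [ha]; omega
  have key : s + j ≤ r + a := by simp only [ha]; omega
  have hQle : s - a ≤ r - i := by simp only [ha]; omega
  have hRle : j - a ≤ r - i := by simp only [ha]; omega
  refine ⟨1 / (2 ^ e * (e.factorial : ℝ)), (2 : ℝ) ^ (2 * r) * (e + 1), by positivity,
    by positivity, 4 * r + 2 * e + 2, fun n hn x y hx hy hxy => ?_⟩
  have hn1 : 1 ≤ n := by omega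
  set S := {z : Finset (Fin n) | z.card = r ∧ (z ∩ y).card = j ∧ (z ∩ x).card = s} with hSdef
  set F : Finset (Finset (Fin n)) :=
    Finset.univ.filter (fun z => z.card = r ∧ (z ∩ y).card = j ∧ (z ∩ x).card = s) with hF
  have hSF : S.ncard = F.card := by
    have : S = ↑F := by ext z; simp [hSdef, hF]
    rw [this, Set.ncard_coe_finset]
  set u := x ∪ y with hu
  have hucard : u.card + i = 2 * r := by
    rw [hu]
    have := Finset.card_union_add_card_inter x y
    omega
  -- Upper bound in ℕ
  have upper : F.card ≤ 2 ^ (2 * r) * ((e + 1) * n ^ e) := by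
    have step : F.card ≤ (u.powerset ×ˢ
        (Finset.range (e + 1)).biUnion
          (fun k => (Finset.univ : Finset (Fin n)).powersetCard k)).card := by
      apply Finset.card_le_card_of_injOn (fun z => (z ∩ u, z \ u))
      · intro z hz
        simp only [hF, Finset.mem_coe, Finset.mem_filter] at hz
        obtain ⟨_, hzr, hzy, hzx⟩ := hz
        rw [Finset.mem_coe, Finset.mem_product]
        constructor
        · exact Finset.mem_powerset.2 Finset.inter_subset_right
        · rw [Finset.mem_biUnion]
          refine ⟨(z \ u).card, Finset.mem_range.2 ?_,
            Finset.mem_powersetCard.2 ⟨Finset.subset_univ _, rfl⟩⟩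
          have hzu : z ∩ u = (z ∩ x) ∪ (z ∩ y) := by
            rw [hu]; exact Finset.inter_union_distrib_left z x y
          have c1 := Finset.card_union_add_card_inter (z ∩ x) (z ∩ y)
          have c2 := Finset.card_sdiff_add_card_inter z u
          have hb1 : ((z ∩ x) ∩ (z ∩ y)).card ≤ s := by
            refine le_trans (Finset.card_le_card ?_) (le_of_eq hzx)
            exact Finset.inter_subset_left
          have hb2 : ((z ∩ x) ∩ (z ∩ y)).card ≤ j := by
            refine le_trans (Finset.card_le_card ?_) (le_of_eq hzy)
            exact Finset.inter_subset_right
          have hb3 : ((z ∩ x) ∩ (z ∩ y)).card ≤ i := by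
            refine le_trans (Finset.card_le_card ?_) (le_of_eq hxy)
            intro t ht
            simp only [Finset.mem_inter] at ht ⊢
            tauto
          rw [hzu] at c2
          simp only [he, ha] at hb1 hb2 hb3 ⊢
          omega
      · intro z1 hz1 z2 hz2 hz
        simp only [Prod.mk.injEq] at hz
        have e1 : z1 = (z1 \ u) ∪ (z1 ∩ u) := (Finset.sdiff_union_inter z1 u).symm
        have e2 : z2 = (z2 \ u) ∪ (z2 ∩ u) := (Finset.sdiff_union_inter z2 u).symm
        rw [e1, e2, hz.1, hz.2]
    refine le_trans step ?_
    rw [Finset.card_product]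
    have hp : u.powerset.card ≤ 2 ^ (2 * r) := by
      rw [Finset.card_powerset]
      exact Nat.pow_le_pow_right (by norm_num) (by omega)
    have hb : ((Finset.range (e + 1)).biUnion
        (fun k => (Finset.univ : Finset (Fin n)).powersetCard k)).card ≤ (e + 1) * n ^ e := by
      refine le_trans (Finset.card_biUnion_le) ?_
      have : ∀ k ∈ Finset.range (e + 1),
          ((Finset.univ : Finset (Fin n)).powersetCard k).card ≤ n ^ e := by
        intro k hk
        rw [Finset.card_powersetCard, Finset.card_univ, Fintype.card_fin]
        refine le_trans (Nat.choose_le_pow n k) ?_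
        exact Nat.pow_le_pow_right hn1 (by simpa using Nat.lt_succ_iff.1 (Finset.mem_range.1 hk))
      calc ∑ k ∈ Finset.range (e + 1), ((Finset.univ : Finset (Fin n)).powersetCard k).card
          ≤ ∑ _k ∈ Finset.range (e + 1), n ^ e := Finset.sum_le_sum this
        _ = (e + 1) * n ^ e := by rw [Finset.sum_const, Finset.card_range, smul_eq_mul]
    exact Nat.mul_le_mul hp hb
  -- Lower bound in ℕ
  have lower : (n - 2 * r).choose e ≤ F.card := by
    have hxycard : (x \ y).card = r - i := by
      have := Finset.card_sdiff_add_card_inter x y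
      omega
    have hyxcard : (y \ x).card = r - i := by
      have := Finset.card_sdiff_add_card_inter y x
      rw [Finset.inter_comm] at this
      omega
    obtain ⟨P, hPsub, hPcard⟩ := Finset.exists_subset_card_eq (s := x ∩ y) (n := a) (by omega)
    obtain ⟨Q, hQsub, hQcard⟩ := Finset.exists_subset_card_eq (s := x \ y) (n := s - a) (by omega)
    obtain ⟨R, hRsub, hRcard⟩ := Finset.exists_subset_card_eq (s := y \ x) (n := j - a) (by omega)
    have hPx : ∀ t ∈ P, t ∈ x := fun t ht => (Finset.mem_inter.1 (hPsub ht)).1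
    have hPy : ∀ t ∈ P, t ∈ y := fun t ht => (Finset.mem_inter.1 (hPsub ht)).2
    have hQx : ∀ t ∈ Q, t ∈ x := fun t ht => (Finset.mem_sdiff.1 (hQsub ht)).1
    have hQy : ∀ t ∈ Q, t ∉ y := fun t ht => (Finset.mem_sdiff.1 (hQsub ht)).2
    have hRy : ∀ t ∈ R, t ∈ y := fun t ht => (Finset.mem_sdiff.1 (hRsub ht)).1
    have hRx : ∀ t ∈ R, t ∉ x := fun t ht => (Finset.mem_sdiff.1 (hRsub ht)).2
    have step : (uᶜ.powersetCard e).card ≤ F.card := by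
      apply Finset.card_le_card_of_injOn (fun W => P ∪ Q ∪ R ∪ W)
      · intro W hW
        rw [Finset.mem_coe, Finset.mem_powersetCard] at hW
        obtain ⟨hWsub, hWcard⟩ := hW
        have hWx : ∀ t ∈ W, t ∉ x := by
          intro t ht htx
          have := hWsub ht
          rw [Finset.mem_compl, hu, Finset.mem_union] at this
          tauto
        have hWy : ∀ t ∈ W, t ∉ y := by
          intro t ht hty
          have := hWsub ht
          rw [Finset.mem_compl, hu, Finset.mem_union] at this
          tauto
        set z := P ∪ Q ∪ R ∪ W with hz
        have hzx : z ∩ x = P ∪ Q := by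
          ext t
          simp only [hz, Finset.mem_inter, Finset.mem_union]
          constructor
          · rintro ⟨(((h | h) | h) | h), htx⟩
            · exact Or.inl h
            · exact Or.inr h
            · exact absurd htx (hRx t h)
            · exact absurd htx (hWx t h)
          · rintro (h | h)
            · exact ⟨Or.inl (Or.inl (Or.inl h)), hPx t h⟩
            · exact ⟨Or.inl (Or.inl (Or.inr h)), hQx t h⟩
        have hzy : z ∩ y = P ∪ R := by
          ext t
          simp only [hz, Finset.mem_inter, Finset.mem_union]
          constructor
          · rintro ⟨(((h | h) | h) | h), hty⟩
            · exact Or.inl h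
            · exact absurd hty (hQy t h)
            · exact Or.inr h
            · exact absurd hty (hWy t h)
          · rintro (h | h)
            · exact ⟨Or.inl (Or.inl (Or.inl h)), hPy t h⟩
            · exact ⟨Or.inl (Or.inr h), hRy t h⟩
        have hdPQ : Disjoint P Q := by
          rw [Finset.disjoint_left]
          intro t ht
          exact fun htq => hQy t htq (hPy t ht)
        have hdPR : Disjoint P R := by
          rw [Finset.disjoint_left]
          intro t ht
          exact fun htr => hRx t htr (hPx t ht)
        have hdQR : Disjoint Q R := by
          rw [Finset.disjoint_left]
          intro t ht
          exact fun htr => hRx t htr (hQx t ht)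
        have hdPQR_W : Disjoint (P ∪ Q ∪ R) W := by
          rw [Finset.disjoint_right]
          intro t ht
          simp only [Finset.mem_union]
          push_neg
          exact ⟨⟨fun h => hWx t ht (hPx t h), fun h => hWx t ht (hQx t h)⟩,
            fun h => hWy t ht (hRy t h)⟩
        have hzxcard : (z ∩ x).card = s := by
          rw [hzx, Finset.card_union_of_disjoint hdPQ, hPcard, hQcard]
          omega
        have hzycard : (z ∩ y).card = j := by
          rw [hzy, Finset.card_union_of_disjoint hdPR, hPcard, hRcard]
          omega
        have hzcard : z.card = r := by
          rw [hz, Finset.card_union_of_disjoint hdPQR_W,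
            Finset.card_union_of_disjoint (Finset.disjoint_union_left.2 ⟨hdPR, hdQR⟩),
            Finset.card_union_of_disjoint hdPQ, hPcard, hQcard, hRcard, hWcard]
          simp only [he]
          omega
        simp only [hF, Finset.mem_coe, Finset.mem_filter]
        exact ⟨Finset.mem_univ _, hzcard, hzycard, hzxcard⟩
      · have hfix : ∀ W ∈ uᶜ.powersetCard e, (P ∪ Q ∪ R ∪ W) \ u = W := by
          intro W hW
          rw [Finset.mem_powersetCard] at hW
          ext t
          simp only [Finset.mem_sdiff, Finset.mem_union]
          constructor
          · rintro ⟨(((h | h) | h) | h), htu⟩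
            · exact absurd (by rw [hu, Finset.mem_union]; exact Or.inl (hPx t h)) htu
            · exact absurd (by rw [hu, Finset.mem_union]; exact Or.inl (hQx t h)) htu
            · exact absurd (by rw [hu, Finset.mem_union]; exact Or.inr (hRy t h)) htu
            · exact h
          · intro h
            refine ⟨Or.inr h, ?_⟩
            have := hW.1 h
            rwa [Finset.mem_compl] at this
        intro W1 hW1 W2 hW2 hEq
        have h1' := hfix W1 (Finset.mem_coe.1 hW1)
        have h2' := hfix W2 (Finset.mem_coe.1 hW2)
        rw [← h1', ← h2']
        exact congrArg (· \ u) hEq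
    refine le_trans ?_ step
    rw [Finset.card_powersetCard, Finset.card_compl, Fintype.card_fin]
    exact Nat.choose_le_choose e (by omega)
  -- Assemble
  rw [hSF]
  constructor
  · -- lower bound over ℝ
    have hcast : ((n - 2 * r).choose e : ℝ) ≤ (F.card : ℝ) := by exact_mod_cast lower
    refine le_trans ?_ hcast
    have hple := Nat.pow_le_choose e (n - 2 * r) (α := ℝ)
    refine le_trans ?_ hple
    have hm : (n : ℝ) ≤ 2 * ((n - 2 * r + 1 - e : ℕ) : ℝ) := by
      have : n ≤ 2 * (n - 2 * r + 1 - e) := by omega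
      exact_mod_cast this
    have h3 : (n : ℝ) ^ e ≤ ((n - 2 * r + 1 - e : ℕ) : ℝ) ^ e * 2 ^ e := by
      calc (n : ℝ) ^ e ≤ (2 * ((n - 2 * r + 1 - e : ℕ) : ℝ)) ^ e := by
            exact pow_le_pow_left₀ (Nat.cast_nonneg n) hm e
        _ = ((n - 2 * r + 1 - e : ℕ) : ℝ) ^ e * 2 ^ e := by ring
    rw [one_div, inv_mul_eq_div, div_le_div_iff₀ (by positivity) (by positivity)]
    calc (n : ℝ) ^ e * (e.factorial : ℝ)
        ≤ (((n - 2 * r + 1 - e : ℕ) : ℝ) ^ e * 2 ^ e) * (e.factorial : ℝ) := by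
          exact mul_le_mul_of_nonneg_right h3 (by positivity)
      _ = ((n - 2 * r + 1 - e : ℕ) : ℝ) ^ e * (2 ^ e * (e.factorial : ℝ)) := by ring
  · -- upper bound over ℝ
    have hcast : (F.card : ℝ) ≤ (2 : ℝ) ^ (2 * r) * ((e + 1) * (n : ℝ) ^ e) := by
      have := upper
      push_cast
      exact_mod_cast this
    refine le_trans hcast (le_of_eq ?_)
    ring
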